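/- Let a, b, c be nonzero squarefree pairwise coprime integers satisfying: (A) not all the same sign, and (B) -bc, -ca, -ab quadratic residues mod a, b, c respectively. If ax² + by² + cz² = 0 has a nonzero solution over ℝ and over every ℚ_p, then it has a nonzero rational solution (Hasse–Minkowski for this ternary diagonal form). -/

import Mathlib

/-- CRT for two coprime integers. -/
lemma crt2 (a b r s : ℤ) (h : IsCoprime a b) : ∃ u, a ∣ u - r ∧ b ∣ u - s := by
  obtain ⟨m, n, hmn⟩ := h
  refine ⟨s * (m * a) + r * (n * b), ⟨(s - r) * m, ?_⟩, ⟨(r - s) * n, ?_⟩⟩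
  · linear_combination r * hmn
  · linear_combination s * hmn

/-- CRT for three pairwise coprime integers. -/
lemma crt3 (a b c r s t : ℤ) (hab : IsCoprime a b) (hbc : IsCoprime b c)
    (hca : IsCoprime c a) : ∃ u, a ∣ u - r ∧ b ∣ u - s ∧ c ∣ u - t := by
  obtain ⟨u₁, hu₁b, hu₁c⟩ := crt2 b c s t hbc
  obtain ⟨u, hua, hubc⟩ := crt2 a (b * c) r u₁ (hab.mul_right hca.symm)
  refine ⟨u, hua, ?_, ?_⟩
  · have : b ∣ u - u₁ := (dvd_mul_right b c).trans hubc
    have := dvd_add this hu₁b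
    simpa using this
  · have : c ∣ u - u₁ := (dvd_mul_left c b).trans hubc
    have := dvd_add this hu₁c
    simpa using this

/-- squarefree positive integer that is a perfect square is 1 -/
lemma sqfree_sq_eq_one {k z : ℤ} (hk : Squarefree k) (h : z * z = k) : k = 1 := by
  have hu : IsUnit z := hk z (h ▸ dvd_refl k)
  rcases Int.isUnit_iff.mp hu with h1 | h1 <;> simp [h1] at h <;> omega

set_option maxHeartbeats 1000000 in
/-- Core of Legendre's theorem: `a, b > 0`, `c < 0`. -/
lemma legendre_core (a b c : ℤ) (ha : 0 < a) (hb : 0 < b) (hc : c < 0)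
    (hsa : Squarefree a) (hsb : Squarefree b) (hsc : Squarefree c)
    (hab : IsCoprime a b) (hbc : IsCoprime b c) (hca : IsCoprime c a)
    (hd' : ∃ d : ℤ, a ∣ d ^ 2 + b * c) (he' : ∃ e : ℤ, b ∣ e ^ 2 + c * a)
    (hf' : ∃ f : ℤ, c ∣ f ^ 2 + a * b) :
    ∃ x y z : ℤ, ¬(x = 0 ∧ y = 0 ∧ z = 0) ∧ a * x ^ 2 + b * y ^ 2 + c * z ^ 2 = 0 := by
  obtain ⟨d, hd⟩ := hd'
  obtain ⟨e, he⟩ := he'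
  obtain ⟨f, hf⟩ := hf'
  set c' : ℤ := -c with hc'
  have hc'0 : 0 < c' := by omega
  -- key divisibility lemmas
  have keyA : ∀ x y z : ℤ, a ∣ b * y - d * z → a ∣ a * x ^ 2 + b * y ^ 2 + c * z ^ 2 := by
    intro x y z hL
    have h2 : b * (a * x ^ 2 + b * y ^ 2 + c * z ^ 2) =
        a * (b * x ^ 2) + (b * y - d * z) * (b * y + d * z) + (d ^ 2 + b * c) * z ^ 2 := by ring
    have : a ∣ b * (a * x ^ 2 + b * y ^ 2 + c * z ^ 2) := by
      rw [h2]
      exact dvd_add (dvd_add (dvd_mul_right a _) (hL.mul_right _)) (hd.mul_right _)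
    exact hab.dvd_of_dvd_mul_left this
  have keyB : ∀ x y z : ℤ, b ∣ c * z - e * x → b ∣ a * x ^ 2 + b * y ^ 2 + c * z ^ 2 := by
    intro x y z hL
    have h2 : c * (a * x ^ 2 + b * y ^ 2 + c * z ^ 2) =
        b * (c * y ^ 2) + (c * z - e * x) * (c * z + e * x) + (e ^ 2 + c * a) * x ^ 2 := by ring
    have : b ∣ c * (a * x ^ 2 + b * y ^ 2 + c * z ^ 2) := by
      rw [h2]
      exact dvd_add (dvd_add (dvd_mul_right b _) (hL.mul_right _)) (he.mul_right _)
    exact hbc.dvd_of_dvd_mul_left this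
  have keyC : ∀ x y z : ℤ, c ∣ a * x - f * y → c ∣ a * x ^ 2 + b * y ^ 2 + c * z ^ 2 := by
    intro x y z hL
    have h2 : a * (a * x ^ 2 + b * y ^ 2 + c * z ^ 2) =
        c * (a * z ^ 2) + (a * x - f * y) * (a * x + f * y) + (f ^ 2 + a * b) * y ^ 2 := by ring
    have : c ∣ a * (a * x ^ 2 + b * y ^ 2 + c * z ^ 2) := by
      rw [h2]
      exact dvd_add (dvd_add (dvd_mul_right c _) (hL.mul_right _)) (hf.mul_right _)
    exact hca.dvd_of_dvd_mul_left this
  -- CRT coefficients of the linear form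
  obtain ⟨u, hua, hub, huc⟩ := crt3 a b c 0 (-e) a hab hbc hca
  obtain ⟨v, hva, hvb, hvc⟩ := crt3 a b c b 0 (-f) hab hbc hca
  obtain ⟨w, hwa, hwb, hwc⟩ := crt3 a b c (-d) c 0 hab hbc hca
  have keyL : ∀ x y z : ℤ, (a * b * c) ∣ u * x + v * y + w * z →
      (a * b * c) ∣ a * x ^ 2 + b * y ^ 2 + c * z ^ 2 := by
    intro x y z hL
    have hA : a ∣ a * x ^ 2 + b * y ^ 2 + c * z ^ 2 := by
      apply keyA x y z
      have h1 : a ∣ u * x + v * y + w * z := (dvd_mul_right a b).mul_right c |>.trans hL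
      have : b * y - d * z = (u * x + v * y + w * z)
          - ((u - 0) * x + (v - b) * y + (w - -d) * z) := by ring
      rw [this]
      exact dvd_sub h1 (dvd_add (dvd_add (hua.mul_right x)
        (hva.mul_right y)) (hwa.mul_right z))
    have hB : b ∣ a * x ^ 2 + b * y ^ 2 + c * z ^ 2 := by
      apply keyB x y z
      have h1 : b ∣ u * x + v * y + w * z := ((dvd_mul_left b a).mul_right c).trans hL
      have : c * z - e * x = (u * x + v * y + w * z)
          - ((u - -e) * x + (v - 0) * y + (w - c) * z) := by ring
      rw [this]
      exact dvd_sub h1 (dvd_add (dvd_add (hub.mul_right x)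
        (hvb.mul_right y)) (hwb.mul_right z))
    have hC : c ∣ a * x ^ 2 + b * y ^ 2 + c * z ^ 2 := by
      apply keyC x y z
      have h1 : c ∣ u * x + v * y + w * z := (dvd_mul_left c (a * b)).trans hL
      have : a * x - f * y = (u * x + v * y + w * z)
          - ((u - a) * x + (v - -f) * y + (w - 0) * z) := by ring
      rw [this]
      exact dvd_sub h1 (dvd_add (dvd_add (huc.mul_right x)
        (hvc.mul_right y)) (hwc.mul_right z))
    exact (IsCoprime.mul_left hca.symm hbc).mul_dvd (hab.mul_dvd hA hB) hC
  -- pigeonhole: find small x y z with a*b*c' dividing the form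
  have main : ∃ x y z : ℤ, ¬(x = 0 ∧ y = 0 ∧ z = 0) ∧
      (a * b * c') ∣ a * x ^ 2 + b * y ^ 2 + c * z ^ 2 ∧
      x ^ 2 ≤ b * c' ∧ y ^ 2 ≤ c' * a ∧ z ^ 2 ≤ a * b := by
    classical
    set n : ℕ := (a * b * c').toNat with hn
    have hnz : (n : ℤ) = a * b * c' := Int.toNat_of_nonneg (by positivity)
    have hnpos : 0 < n := by
      have : (0:ℤ) < a * b * c' := by positivity
      omega
    haveI : NeZero n := ⟨hnpos.ne'⟩
    set m₁ : ℕ := Nat.sqrt (b * c').toNat with hm1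
    set m₂ : ℕ := Nat.sqrt (c' * a).toNat with hm2
    set m₃ : ℕ := Nat.sqrt (a * b).toNat with hm3
    have hbc'z : ((b * c').toNat : ℤ) = b * c' := Int.toNat_of_nonneg (by positivity)
    have hc'az : ((c' * a).toNat : ℤ) = c' * a := Int.toNat_of_nonneg (by positivity)
    have habz : ((a * b).toNat : ℤ) = a * b := Int.toNat_of_nonneg (by positivity)
    have hm1sq : ((m₁ : ℤ)) ^ 2 ≤ b * c' := by
      have h := Nat.sqrt_le' (b * c').toNat
      calc ((m₁ : ℤ)) ^ 2 = ((m₁ ^ 2 : ℕ) : ℤ) := by push_cast; ring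
      _ ≤ ((b * c').toNat : ℤ) := by exact_mod_cast h
      _ = b * c' := hbc'z
    have hm2sq : ((m₂ : ℤ)) ^ 2 ≤ c' * a := by
      have h := Nat.sqrt_le' (c' * a).toNat
      calc ((m₂ : ℤ)) ^ 2 = ((m₂ ^ 2 : ℕ) : ℤ) := by push_cast; ring
      _ ≤ ((c' * a).toNat : ℤ) := by exact_mod_cast h
      _ = c' * a := hc'az
    have hm3sq : ((m₃ : ℤ)) ^ 2 ≤ a * b := by
      have h := Nat.sqrt_le' (a * b).toNat
      calc ((m₃ : ℤ)) ^ 2 = ((m₃ ^ 2 : ℕ) : ℤ) := by push_cast; ring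
      _ ≤ ((a * b).toNat : ℤ) := by exact_mod_cast h
      _ = a * b := habz
    have hcard : n < (m₁ + 1) * ((m₂ + 1) * (m₃ + 1)) := by
      have h1 : (b * c').toNat < (m₁ + 1) ^ 2 := Nat.lt_succ_sqrt' _
      have h2 : (c' * a).toNat < (m₂ + 1) ^ 2 := Nat.lt_succ_sqrt' _
      have h3 : (a * b).toNat < (m₃ + 1) ^ 2 := Nat.lt_succ_sqrt' _
      have hn2 : n ^ 2 = (b * c').toNat * ((c' * a).toNat * (a * b).toNat) := by
        have : ((n : ℤ)) ^ 2
            = ((b * c').toNat : ℤ) * (((c' * a).toNat : ℤ) * ((a * b).toNat : ℤ)) := by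
          rw [hnz, hbc'z, hc'az, habz]; ring
        exact_mod_cast this
      by_contra hcon
      push_neg at hcon
      have hPn : ((m₁ + 1) * ((m₂ + 1) * (m₃ + 1))) ^ 2 ≤ n ^ 2 :=
        Nat.pow_le_pow_left hcon 2
      have hP' : ((m₁ + 1) * ((m₂ + 1) * (m₃ + 1))) ^ 2
          = (m₁ + 1) ^ 2 * ((m₂ + 1) ^ 2 * (m₃ + 1) ^ 2) := by ring
      have hkey : (b * c').toNat * ((c' * a).toNat * (a * b).toNat)
          < ((b * c').toNat + 1) * (((c' * a).toNat + 1) * ((a * b).toNat + 1)) := by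
        nlinarith [Nat.zero_le ((b * c').toNat), Nat.zero_le ((c' * a).toNat),
          Nat.zero_le ((a * b).toNat)]
      have hle : ((b * c').toNat + 1) * (((c' * a).toNat + 1) * ((a * b).toNat + 1))
          ≤ (m₁ + 1) ^ 2 * ((m₂ + 1) ^ 2 * (m₃ + 1) ^ 2) :=
        Nat.mul_le_mul h1 (Nat.mul_le_mul h2 h3)
      omega
    set S : Finset (ℤ × ℤ × ℤ) :=
      Finset.Icc 0 (m₁ : ℤ) ×ˢ Finset.Icc 0 (m₂ : ℤ) ×ˢ Finset.Icc 0 (m₃ : ℤ) with hS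
    have hScard : S.card = (m₁ + 1) * ((m₂ + 1) * (m₃ + 1)) := by
      rw [hS, Finset.card_product, Finset.card_product, Int.card_Icc, Int.card_Icc,
        Int.card_Icc]
      simp
    obtain ⟨p, hp, q, hq, hne, hfeq⟩ :=
      Finset.exists_ne_map_eq_of_card_lt_of_maps_to
        (s := S) (t := (Finset.univ : Finset (ZMod n)))
        (by rw [hScard, Finset.card_univ, ZMod.card]; exact hcard)
        (f := fun p => ((u * p.1 + v * p.2.1 + w * p.2.2 : ℤ) : ZMod n))
        (fun p _ => Finset.mem_univ _)
    refine ⟨p.1 - q.1, p.2.1 - q.2.1, p.2.2 - q.2.2, ?_, ?_, ?_, ?_, ?_⟩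
    · rintro ⟨h1, h2, h3⟩
      exact hne (Prod.ext (by omega) (Prod.ext (by omega) (by omega)))
    · have h1 : (u * p.1 + v * p.2.1 + w * p.2.2 : ℤ) ≡
          (u * q.1 + v * q.2.1 + w * q.2.2 : ℤ) [ZMOD (n : ℤ)] :=
        (ZMod.intCast_eq_intCast_iff _ _ _).mp hfeq
      have h2 : (n : ℤ) ∣ u * (p.1 - q.1) + v * (p.2.1 - q.2.1) + w * (p.2.2 - q.2.2) := by
        have h3 := h1.symm.dvd
        have heq : (u * p.1 + v * p.2.1 + w * p.2.2) - (u * q.1 + v * q.2.1 + w * q.2.2)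
            = u * (p.1 - q.1) + v * (p.2.1 - q.2.1) + w * (p.2.2 - q.2.2) := by ring
        rwa [heq] at h3
      rw [hnz] at h2
      have heq2 : a * b * c' = -(a * b * c) := by rw [hc']; ring
      rw [heq2, neg_dvd]
      apply keyL
      have heq3 : a * b * c = -(a * b * c') := by rw [hc']; ring
      rw [heq3, neg_dvd]
      exact h2
    all_goals {
      simp only [hS, Finset.mem_product, Finset.mem_Icc] at hp hq
      obtain ⟨⟨hp1a, hp1b⟩, ⟨hp2a, hp2b⟩, ⟨hp3a, hp3b⟩⟩ := hp
      obtain ⟨⟨hq1a, hq1b⟩, ⟨hq2a, hq2b⟩, ⟨hq3a, hq3b⟩⟩ := hq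
      first
      | exact le_trans (sq_le_sq' (by omega) (by omega)) hm1sq
      | exact le_trans (sq_le_sq' (by omega) (by omega)) hm2sq
      | exact le_trans (sq_le_sq' (by omega) (by omega)) hm3sq }
  clear hua hub huc hva hvb hvc hwa hwb hwc keyA keyB keyC keyL
  obtain ⟨x, y, z, hxyz0, hNdvd, hx2, hy2, hz2⟩ := main
  obtain ⟨k, hk⟩ := hNdvd
  have habc'pos : 0 < a * b * c' := by positivity
  have hax2 : a * x ^ 2 ≤ a * (b * c') := mul_le_mul_of_nonneg_left hx2 ha.le
  have hby2 : b * y ^ 2 ≤ b * (c' * a) := mul_le_mul_of_nonneg_left hy2 hb.le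
  have hcz2 : c * z ^ 2 ≤ 0 := mul_nonpos_of_nonpos_of_nonneg hc.le (sq_nonneg z)
  have hcz2' : c * (a * b) ≤ c * z ^ 2 := mul_le_mul_of_nonpos_left hz2 hc.le
  have hxnn : 0 ≤ a * x ^ 2 := by positivity
  have hynn : 0 ≤ b * y ^ 2 := by positivity
  have hcab : c * (a * b) = -(a * b * c') := by rw [hc']; ring
  have hk1 : -1 ≤ k := by nlinarith [hk, hcz2', hcab, hxnn, hynn, habc'pos]
  have hk2 : k ≤ 2 := by nlinarith [hk, hax2, hby2, hcz2, habc'pos]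
  interval_cases k
  · -- k = -1 : then x = y = 0, z² = a*b, forcing a = b = 1; use sum of two squares
    have hax0 : a * x ^ 2 = 0 := by linarith [hk, hcz2', hcab, hxnn, hynn]
    have hby0 : b * y ^ 2 = 0 := by linarith [hk, hcz2', hcab, hxnn, hynn]
    have hx0 : x = 0 := by
      rcases mul_eq_zero.mp hax0 with h | h
      · exact absurd h ha.ne'
      · exact pow_eq_zero_iff (n := 2) (by norm_num) |>.mp h
    have hy0 : y = 0 := by
      rcases mul_eq_zero.mp hby0 with h | h
      · exact absurd h hb.ne'
      · exact pow_eq_zero_iff (n := 2) (by norm_num) |>.mp h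
    have hzz : z * z = a * b := by
      have h1 : c * z ^ 2 = -(a * b * c') := by
        rw [hx0, hy0] at hk; linarith [hk]
      have h2 : c' * (z * z) = c' * (a * b) := by rw [hc'] at h1 ⊢; nlinarith
      exact mul_left_cancel₀ hc'0.ne' h2
    have hsab : Squarefree (a * b) := squarefree_mul_iff.mpr ⟨hab.isRelPrime, hsa, hsb⟩
    have hab1 : a * b = 1 := sqfree_sq_eq_one hsab hzz
    have ha1 : a = 1 := by
      have hu : IsUnit a := IsUnit.of_mul_eq_one b hab1
      rcases Int.isUnit_iff.mp hu with h | h <;> omega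
    have hb1 : b = 1 := by
      have hu : IsUnit b := IsUnit.of_mul_eq_one a (by linarith [hab1] <;> skip)
      rcases Int.isUnit_iff.mp hu with h | h <;> omega
    -- now the equation is x² + y² + c z² = 0 with -1 a square mod c
    have hm : ((c'.toNat : ℤ)) = c' := Int.toNat_of_nonneg hc'0.le
    have hsqm : IsSquare (-1 : ZMod c'.toNat) := by
      have hdvd : ((c'.toNat : ℤ)) ∣ f ^ 2 + 1 := by
        rw [hm, hc']
        rw [neg_dvd]
        have : f ^ 2 + a * b = f ^ 2 + 1 := by rw [hab1]
        rwa [this] at hf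
      have h0 : ((f ^ 2 + 1 : ℤ) : ZMod c'.toNat) = 0 :=
        (ZMod.intCast_zmod_eq_zero_iff_dvd _ _).mpr hdvd
      push_cast at h0
      exact ⟨(f : ZMod c'.toNat), by linear_combination -h0⟩
    obtain ⟨X, Y, hXY⟩ := Nat.eq_sq_add_sq_of_isSquare_mod_neg_one hsqm
    refine ⟨(X : ℤ), (Y : ℤ), 1, by simp, ?_⟩
    have hXYz : ((X : ℤ)) ^ 2 + ((Y : ℤ)) ^ 2 = c' := by
      rw [← hm]
      exact_mod_cast hXY.symm
    rw [ha1, hb1]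
    rw [hc'] at hXYz
    linarith [hXYz]
  · -- k = 0 : direct solution
    exact ⟨x, y, z, hxyz0, by linarith [hk]⟩
  · -- k = 1 : use the composition identity
    rw [hc'] at hk
    refine ⟨x * z + b * y, y * z - a * x, z ^ 2 + a * b, ?_,
      by linear_combination (z ^ 2 + a * b) * hk⟩
    rintro ⟨-, -, h3⟩
    have : (0:ℤ) < z ^ 2 + a * b := by positivity
    omega
  · -- k = 2 : forces b = 1, c' = 1
    have haxeq : a * x ^ 2 = a * (b * c') := by nlinarith [hk, hax2, hby2, hcz2]
    have hx2eq : x * x = b * c' := by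
      have h := mul_left_cancel₀ ha.ne' haxeq
      nlinarith [h]
    have hsbc' : Squarefree (b * c') := by
      have h1 : Squarefree (b * c) := squarefree_mul_iff.mpr ⟨hbc.isRelPrime, hsb, hsc⟩
      have h2 : (b * c').natAbs = (b * c).natAbs := by
        rw [hc']
        simp [Int.natAbs_mul]
      rw [← Int.squarefree_natAbs, h2, Int.squarefree_natAbs]
      exact h1
    have hbc1 : b * c' = 1 := sqfree_sq_eq_one hsbc' hx2eq
    have hb1 : b = 1 := by
      have hu : IsUnit b := IsUnit.of_mul_eq_one c' hbc1
      rcases Int.isUnit_iff.mp hu with h | h <;> omega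
    have hc1 : c = -1 := by
      have hc'1 : c' = 1 := by rw [hb1] at hbc1; linarith
      omega
    exact ⟨0, 1, 1, by simp, by rw [hb1, hc1]; ring⟩

/-- Core extended to both sign patterns (+,+,-) and (-,-,+). -/
lemma legendre_core' (a b c : ℤ)
    (hsgn : (0 < a ∧ 0 < b ∧ c < 0) ∨ (a < 0 ∧ b < 0 ∧ 0 < c))
    (hsa : Squarefree a) (hsb : Squarefree b) (hsc : Squarefree c)
    (hab : IsCoprime a b) (hbc : IsCoprime b c) (hca : IsCoprime c a)
    (hd' : ∃ d : ℤ, a ∣ d ^ 2 + b * c) (he' : ∃ e : ℤ, b ∣ e ^ 2 + c * a)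
    (hf' : ∃ f : ℤ, c ∣ f ^ 2 + a * b) :
    ∃ x y z : ℤ, ¬(x = 0 ∧ y = 0 ∧ z = 0) ∧ a * x ^ 2 + b * y ^ 2 + c * z ^ 2 = 0 := by
  have sqneg : ∀ t : ℤ, Squarefree t → Squarefree (-t) := by
    intro t ht
    rw [← Int.squarefree_natAbs, Int.natAbs_neg, Int.squarefree_natAbs]
    exact ht
  rcases hsgn with ⟨h1, h2, h3⟩ | ⟨h1, h2, h3⟩
  · exact legendre_core a b c h1 h2 h3 hsa hsb hsc hab hbc hca hd' he' hf'
  · obtain ⟨x, y, z, h0, heq⟩ :=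
      legendre_core (-a) (-b) (-c) (by omega) (by omega) (by omega)
        (sqneg a hsa) (sqneg b hsb) (sqneg c hsc)
        (hab.neg_left.neg_right) (hbc.neg_left.neg_right) (hca.neg_left.neg_right)
        (by obtain ⟨d, hd⟩ := hd'; exact ⟨d, by rw [neg_dvd, neg_mul_neg]; exact hd⟩)
        (by obtain ⟨e, he⟩ := he'; exact ⟨e, by rw [neg_dvd, neg_mul_neg]; exact he⟩)
        (by obtain ⟨f, hf⟩ := hf'; exact ⟨f, by rw [neg_dvd, neg_mul_neg]; exact hf⟩)
    exact ⟨x, y, z, h0, by linarith [heq]⟩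

/-- Legendre's theorem over ℤ, with the divisibility form of the conditions. -/
lemma legendre_all (a b c : ℤ) (ha : a ≠ 0) (hb : b ≠ 0) (hc : c ≠ 0)
    (hsa : Squarefree a) (hsb : Squarefree b) (hsc : Squarefree c)
    (hab : IsCoprime a b) (hbc : IsCoprime b c) (hca : IsCoprime c a)
    (hA : ¬ ((0 < a ∧ 0 < b ∧ 0 < c) ∨ (a < 0 ∧ b < 0 ∧ c < 0)))
    (hd' : ∃ d : ℤ, a ∣ d ^ 2 + b * c) (he' : ∃ e : ℤ, b ∣ e ^ 2 + c * a)
    (hf' : ∃ f : ℤ, c ∣ f ^ 2 + a * b) :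
    ∃ x y z : ℤ, ¬(x = 0 ∧ y = 0 ∧ z = 0) ∧ a * x ^ 2 + b * y ^ 2 + c * z ^ 2 = 0 := by
  have comm : ∀ s t u : ℤ, (∃ d : ℤ, s ∣ d ^ 2 + t * u) → ∃ d : ℤ, s ∣ d ^ 2 + u * t := by
    intro s t u ⟨d, hd⟩
    exact ⟨d, by rwa [mul_comm]⟩
  rcases lt_or_gt_of_ne ha with ha' | ha' <;>
    rcases lt_or_gt_of_ne hb with hb' | hb' <;>
      rcases lt_or_gt_of_ne hc with hc' | hc'
  · exact absurd (Or.inr ⟨ha', hb', hc'⟩) hA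
  · -- (-,-,+) : identity permutation
    exact legendre_core' a b c (Or.inr ⟨ha', hb', hc'⟩) hsa hsb hsc hab hbc hca hd' he' hf'
  · -- (-,+,-) : permute to (a,c,b) with pattern (-,-,+)
    obtain ⟨x, y, z, h0, heq⟩ :=
      legendre_core' a c b (Or.inr ⟨ha', hc', hb'⟩) hsa hsc hsb
        hca.symm hbc.symm hab.symm (comm a b c hd') (comm c a b hf') (comm b c a he')
    exact ⟨x, z, y, by tauto, by linarith [heq]⟩
  · -- (-,+,+) : permute to (b,c,a) with pattern (+,+,-)
    obtain ⟨x, y, z, h0, heq⟩ :=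
      legendre_core' b c a (Or.inl ⟨hb', hc', ha'⟩) hsb hsc hsa
        hbc hca hab he' hf' hd'
    exact ⟨z, x, y, by tauto, by linarith [heq]⟩
  · -- (+,-,-) : permute to (b,c,a) with pattern (-,-,+)
    obtain ⟨x, y, z, h0, heq⟩ :=
      legendre_core' b c a (Or.inr ⟨hb', hc', ha'⟩) hsb hsc hsa
        hbc hca hab he' hf' hd'
    exact ⟨z, x, y, by tauto, by linarith [heq]⟩
  · -- (+,-,+) : permute to (a,c,b) with pattern (+,+,-)
    obtain ⟨x, y, z, h0, heq⟩ :=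
      legendre_core' a c b (Or.inl ⟨ha', hc', hb'⟩) hsa hsc hsb
        hca.symm hbc.symm hab.symm (comm a b c hd') (comm c a b hf') (comm b c a he')
    exact ⟨x, z, y, by tauto, by linarith [heq]⟩
  · -- (+,+,-) : identity permutation
    exact legendre_core' a b c (Or.inl ⟨ha', hb', hc'⟩) hsa hsb hsc hab hbc hca hd' he' hf'
  · exact absurd (Or.inl ⟨ha', hb', hc'⟩) hA

theorem stmt_19 (a b c : ℤ) (ha : a ≠ 0) (hb : b ≠ 0) (hc : c ≠ 0)
    (hsa : Squarefree a) (hsb : Squarefree b) (hsc : Squarefree c)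
    (hab : IsCoprime a b) (hbc : IsCoprime b c) (hca : IsCoprime c a)
    (hA : ¬ ((0 < a ∧ 0 < b ∧ 0 < c) ∨ (a < 0 ∧ b < 0 ∧ c < 0)))
    (hB1 : ∃ d : ℤ, d ^ 2 ≡ -(b * c) [ZMOD a])
    (hB2 : ∃ e : ℤ, e ^ 2 ≡ -(c * a) [ZMOD b])
    (hB3 : ∃ f : ℤ, f ^ 2 ≡ -(a * b) [ZMOD c])
    (hR : ∃ x y z : ℝ, (x, y, z) ≠ (0, 0, 0) ∧
      (a : ℝ) * x ^ 2 + (b : ℝ) * y ^ 2 + (c : ℝ) * z ^ 2 = 0)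
    (hQp : ∀ (p : ℕ) [Fact p.Prime], ∃ x y z : ℚ_[p], (x, y, z) ≠ (0, 0, 0) ∧
      (a : ℚ_[p]) * x ^ 2 + (b : ℚ_[p]) * y ^ 2 + (c : ℚ_[p]) * z ^ 2 = 0) :
    ∃ x y z : ℚ, (x, y, z) ≠ (0, 0, 0) ∧
      (a : ℚ) * x ^ 2 + (b : ℚ) * y ^ 2 + (c : ℚ) * z ^ 2 = 0 := by
  have conv : ∀ s t : ℤ, (∃ d : ℤ, d ^ 2 ≡ -t [ZMOD s]) → ∃ d : ℤ, s ∣ d ^ 2 + t := by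
    intro s t ⟨d, hd⟩
    refine ⟨d, ?_⟩
    have h1 : s ∣ -t - d ^ 2 := hd.dvd
    have h2 : d ^ 2 + t = -(-t - d ^ 2) := by ring
    rw [h2]
    exact dvd_neg.mpr h1
  obtain ⟨x, y, z, h0, heq⟩ := legendre_all a b c ha hb hc hsa hsb hsc hab hbc hca hA
    (conv a (b * c) hB1) (conv b (c * a) hB2) (conv c (a * b) hB3)
  refine ⟨(x : ℚ), (y : ℚ), (z : ℚ), ?_, ?_⟩
  · simp only [ne_eq, Prod.mk.injEq, Int.cast_eq_zero]
    tauto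
  · exact_mod_cast heq
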